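/- Let x(k+1) = W(k)x(k) where each W(k) is a row-stochastic matrix with positive diagonal entries, and suppose each graph induced by the positive entries of W(k) contains a fixed rooted spanning tree with root r for all k, with all positive entries bounded below by some η > 0. Then max_i x_i(k) − min_i x_i(k) → 0 as k → ∞, i.e., the agents reach consensus. -/
import Mathlib


open Matrix Filter

private lemma crossing_edge {n : ℕ} (R : Fin n → Fin n → Prop) (S : Finset (Fin n))
    {r b : Fin n} (hr : r ∈ S) (h : Relation.ReflTransGen R r b) (hb : b ∉ S) :
    ∃ a ∈ S, ∃ c, c ∉ S ∧ R a c := by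
  induction h with
  | refl => exact absurd hr hb
  | @tail p q hrp hpq ih =>
    by_cases hp : p ∈ S
    · exact ⟨p, hp, q, hb, hpq⟩
    · exact ih hp

private def prodW {n : ℕ} (W : ℕ → Matrix (Fin n) (Fin n) ℝ) (k : ℕ) :
    ℕ → Matrix (Fin n) (Fin n) ℝ
  | 0 => 1
  | t + 1 => W (k + t) * prodW W k t

private lemma prodW_nonneg {n : ℕ} (W : ℕ → Matrix (Fin n) (Fin n) ℝ)
    (hnonneg : ∀ k i j, 0 ≤ W k i j) (k : ℕ) :
    ∀ t i j, 0 ≤ prodW W k t i j := by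
  intro t
  induction t with
  | zero =>
    intro i j
    by_cases h : i = j <;> simp [prodW, Matrix.one_apply, h]
  | succ t ih =>
    intro i j
    simp only [prodW, Matrix.mul_apply]
    exact Finset.sum_nonneg fun l _ => mul_nonneg (hnonneg _ _ _) (ih l j)

private lemma prodW_row {n : ℕ} (W : ℕ → Matrix (Fin n) (Fin n) ℝ)
    (hrow : ∀ k i, ∑ j, W k i j = 1) (k : ℕ) :
    ∀ t i, ∑ j, prodW W k t i j = 1 := by
  intro t
  induction t with
  | zero =>
    intro i
    simp [prodW, Matrix.one_apply]
  | succ t ih =>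
    intro i
    simp only [prodW, Matrix.mul_apply]
    rw [Finset.sum_comm]
    calc ∑ l, ∑ j, W (k + t) i l * prodW W k t l j
        = ∑ l, W (k + t) i l * ∑ j, prodW W k t l j := by
          simp [Finset.mul_sum]
      _ = ∑ l, W (k + t) i l := by simp [ih]
      _ = 1 := hrow _ _

private lemma prodW_mulVec {n : ℕ} (W : ℕ → Matrix (Fin n) (Fin n) ℝ)
    (x : ℕ → Fin n → ℝ) (hx : ∀ k, x (k + 1) = W k *ᵥ x k) (k : ℕ) :
    ∀ t, x (k + t) = prodW W k t *ᵥ x k := by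
  intro t
  induction t with
  | zero => simp [prodW]
  | succ t ih =>
    have : k + (t + 1) = (k + t) + 1 := by ring
    rw [this, hx (k + t), ih, prodW, ← Matrix.mulVec_mulVec]

/-- The growth lemma: the set of nodes with product entry at column `r` at least `η^t`
grows by at least one each step until it is everything. -/
private lemma growth {n : ℕ} (W : ℕ → Matrix (Fin n) (Fin n) ℝ) (η : ℝ) (hη : 0 < η)
    (hnonneg : ∀ k i j, 0 ≤ W k i j)
    (hdiag : ∀ k i, η ≤ W k i i)
    (hlb : ∀ k i j, W k i j ≠ 0 → η ≤ W k i j)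
    (r : Fin n)
    (htree : ∀ k i, Relation.ReflTransGen (fun a b => 0 < W k b a) r i)
    (k : ℕ) :
    ∀ t, ∃ S : Finset (Fin n), r ∈ S ∧ min (t + 1) n ≤ S.card ∧
      ∀ i ∈ S, η ^ t ≤ prodW W k t i r := by
  intro t
  induction t with
  | zero =>
    refine ⟨{r}, Finset.mem_singleton_self r, ?_, ?_⟩
    · have : 0 < n := Fin.pos r
      simp only [Finset.card_singleton]
      omega
    · intro i hi
      rw [Finset.mem_singleton] at hi
      subst hi
      simp [prodW, Matrix.one_apply]
  | succ t ih =>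
    obtain ⟨S, hrS, hcard, hS⟩ := ih
    have hdiagstep : ∀ i ∈ S, η ^ (t + 1) ≤ prodW W k (t + 1) i r := by
      intro i hi
      have h1 : W (k + t) i i * prodW W k t i r ≤ prodW W k (t + 1) i r := by
        simp only [prodW, Matrix.mul_apply]
        exact Finset.single_le_sum
          (f := fun l => W (k + t) i l * prodW W k t l r)
          (fun l _ => mul_nonneg (hnonneg _ _ _) (prodW_nonneg W hnonneg k t l r))
          (Finset.mem_univ i)
      have h2 : η * η ^ t ≤ W (k + t) i i * prodW W k t i r := by
        have := hS i hi
        have := hdiag (k + t) i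
        have := prodW_nonneg W hnonneg k t i r
        nlinarith [pow_pos hη t]
      calc η ^ (t + 1) = η * η ^ t := by ring
        _ ≤ _ := le_trans h2 h1
    by_cases hSu : S = Finset.univ
    · refine ⟨S, hrS, ?_, hdiagstep⟩
      subst hSu
      simp [Finset.card_univ]
    · obtain ⟨b, hb⟩ : ∃ b, b ∉ S := by
        by_contra h
        push_neg at h
        exact hSu (Finset.eq_univ_iff_forall.2 h)
      obtain ⟨a, ha, c, hc, hac⟩ := crossing_edge _ S hrS (htree (k + t) b) hb
      refine ⟨insert c S, Finset.mem_insert_of_mem hrS, ?_, ?_⟩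
      · rw [Finset.card_insert_of_notMem hc]
        have hle : S.card + 1 ≤ n := by
          have := Finset.card_lt_card (Finset.ssubset_univ_iff.2 hSu)
          simp only [Finset.card_univ, Fintype.card_fin] at this
          omega
        omega
      · intro i hi
        rcases Finset.mem_insert.1 hi with h | h
        · subst h
          have h1 : W (k + t) i a * prodW W k t a r ≤ prodW W k (t + 1) i r := by
            simp only [prodW, Matrix.mul_apply]
            exact Finset.single_le_sum
              (f := fun l => W (k + t) i l * prodW W k t l r)
              (fun l _ => mul_nonneg (hnonneg _ _ _) (prodW_nonneg W hnonneg k t l r))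
              (Finset.mem_univ a)
          have h2 : η * η ^ t ≤ W (k + t) i a * prodW W k t a r := by
            have hSa := hS a ha
            -- `hac : 0 < W (k+t) i a`? careful with arg order
            have hWa : η ≤ W (k + t) i a := hlb (k + t) i a (ne_of_gt hac)
            nlinarith [pow_pos hη t, prodW_nonneg W hnonneg k t a r]
          calc η ^ (t + 1) = η * η ^ t := by ring
            _ ≤ _ := le_trans h2 h1
        · exact hdiagstep i h

/-- Spread contraction under a row-stochastic matrix with column `r` bounded below by `γ`. -/
private lemma spread_contract {n : ℕ} (hne : (Finset.univ : Finset (Fin n)).Nonempty)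
    (P : Matrix (Fin n) (Fin n) ℝ) (r : Fin n) (γ : ℝ)
    (hP : ∀ i j, 0 ≤ P i j) (hrow : ∀ i, ∑ j, P i j = 1)
    (hPr : ∀ i, γ ≤ P i r) (x : Fin n → ℝ) :
    Finset.univ.sup' hne (P *ᵥ x) - Finset.univ.inf' hne (P *ᵥ x)
      ≤ (1 - γ) * (Finset.univ.sup' hne x - Finset.univ.inf' hne x) := by
  set M := Finset.univ.sup' hne x with hM
  set m := Finset.univ.inf' hne x with hm
  have hxM : ∀ j, x j ≤ M := fun j => Finset.le_sup' x (Finset.mem_univ j)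
  have hxm : ∀ j, m ≤ x j := fun j => Finset.inf'_le x (Finset.mem_univ j)
  have key : ∀ i, (P *ᵥ x) i ≤ M - γ * (M - x r) ∧ m + γ * (x r - m) ≤ (P *ᵥ x) i := by
    intro i
    have hsum : ∑ j ∈ Finset.univ.erase r, P i j = 1 - P i r := by
      have := Finset.add_sum_erase Finset.univ (fun j => P i j) (Finset.mem_univ r)
      rw [hrow i] at this
      linarith
    have hexp : (P *ᵥ x) i = P i r * x r + ∑ j ∈ Finset.univ.erase r, P i j * x j := by
      simp only [Matrix.mulVec, dotProduct]
      exact (Finset.add_sum_erase Finset.univ (fun j => P i j * x j)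
        (Finset.mem_univ r)).symm
    constructor
    · have hub : ∑ j ∈ Finset.univ.erase r, P i j * x j
          ≤ (1 - P i r) * M := by
        rw [← hsum, Finset.sum_mul]
        exact Finset.sum_le_sum fun j _ =>
          mul_le_mul_of_nonneg_left (hxM j) (hP i j)
      rw [hexp]
      nlinarith [hPr i, hxM r, hP i r]
    · have hlb : (1 - P i r) * m
          ≤ ∑ j ∈ Finset.univ.erase r, P i j * x j := by
        rw [← hsum, Finset.sum_mul]
        exact Finset.sum_le_sum fun j _ =>
          mul_le_mul_of_nonneg_left (hxm j) (hP i j)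
      rw [hexp]
      nlinarith [hPr i, hxm r, hP i r]
  have hsup : Finset.univ.sup' hne (P *ᵥ x) ≤ M - γ * (M - x r) :=
    Finset.sup'_le hne _ fun i _ => (key i).1
  have hinf : m + γ * (x r - m) ≤ Finset.univ.inf' hne (P *ᵥ x) :=
    Finset.le_inf' hne _ fun i _ => (key i).2
  nlinarith [hsup, hinf]

/-- Time-varying consensus: row-stochastic matrices with positive diagonal, all positive
entries bounded below by `η > 0`, whose induced graphs all contain a spanning tree rooted
at a fixed root `r`, drive the states to consensus: the spread `max − min` tends to 0. -/
theorem time_varying_consensus {n : ℕ} (hn : 0 < n)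
    (hne : (Finset.univ : Finset (Fin n)).Nonempty)
    (W : ℕ → Matrix (Fin n) (Fin n) ℝ) (η : ℝ) (hη : 0 < η)
    (hnonneg : ∀ k i j, 0 ≤ W k i j)
    (hrow : ∀ k i, ∑ j, W k i j = 1)
    (hdiag : ∀ k i, η ≤ W k i i)
    (hlb : ∀ k i j, W k i j ≠ 0 → η ≤ W k i j)
    (r : Fin n)
    (htree : ∀ k i, Relation.ReflTransGen (fun a b => 0 < W k b a) r i)
    (x : ℕ → Fin n → ℝ)
    (hx : ∀ k, x (k + 1) = W k *ᵥ x k) :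
    Tendsto (fun k => Finset.univ.sup' hne (x k) - Finset.univ.inf' hne (x k))
      atTop (nhds 0) := by
  set s : ℕ → ℝ := fun k => Finset.univ.sup' hne (x k) - Finset.univ.inf' hne (x k) with hs
  have hη1 : η ≤ 1 := by
    have h1 : W 0 r r ≤ ∑ j, W 0 r j :=
      Finset.single_le_sum (fun j _ => hnonneg 0 r j) (Finset.mem_univ r)
    rw [hrow 0 r] at h1
    exact le_trans (hdiag 0 r) h1
  set c : ℝ := 1 - η ^ n with hc
  have hγpos : 0 < η ^ n := pow_pos hη n
  have hγ1 : η ^ n ≤ 1 := pow_le_one₀ (le_of_lt hη) hη1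
  have hc0 : 0 ≤ c := by simp [hc]; linarith
  have hc1 : c < 1 := by simp [hc]; linarith
  -- nonnegativity of spread
  have hs0 : ∀ k, 0 ≤ s k := by
    intro k
    have : Finset.univ.inf' hne (x k) ≤ Finset.univ.sup' hne (x k) :=
      le_trans (Finset.inf'_le _ (Finset.mem_univ r)) (Finset.le_sup' _ (Finset.mem_univ r))
    exact sub_nonneg.2 this
  -- monotonicity
  have hstep : ∀ k, s (k + 1) ≤ s k := by
    intro k
    have := spread_contract hne (W k) r 0 (hnonneg k) (hrow k)
      (fun i => hnonneg k i r) (x k)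
    rw [← hx k] at this
    simpa [hs] using this
  have hmono : ∀ a b, a ≤ b → s b ≤ s a := by
    intro a b hab
    induction b with
    | zero => simp_all
    | succ b ih =>
      rcases Nat.lt_or_ge a (b + 1) with h | h
      · exact le_trans (hstep b) (ih (by omega))
      · have : a = b + 1 := by omega
        subst this; rfl
  -- contraction over blocks of length n
  have hcontr : ∀ k, s (k + n) ≤ c * s k := by
    intro k
    obtain ⟨S, hrS, hcard, hS⟩ := growth W η hη hnonneg hdiag hlb r htree k n
    have hSu : S = Finset.univ := by
      apply Finset.eq_univ_of_card
      have : min (n + 1) n = n := by omega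
      rw [this] at hcard
      have := Finset.card_le_univ S
      simp [Fintype.card_fin] at this ⊢
      omega
    have hall : ∀ i, η ^ n ≤ prodW W k n i r := by
      intro i; exact hS i (hSu ▸ Finset.mem_univ i)
    have := spread_contract hne (prodW W k n) r (η ^ n)
      (prodW_nonneg W hnonneg k n) (prodW_row W hrow k n) hall (x k)
    rw [← prodW_mulVec W x hx k n] at this
    simpa [hs, hc] using this
  -- geometric bound
  have hgeo : ∀ j, s (j * n) ≤ c ^ j * s 0 := by
    intro j
    induction j with
    | zero => simp
    | succ j ih =>
      have h1 : s ((j + 1) * n) = s (j * n + n) := by ring_nf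
      rw [h1]
      calc s (j * n + n) ≤ c * s (j * n) := hcontr (j * n)
        _ ≤ c * (c ^ j * s 0) := by nlinarith
        _ = c ^ (j + 1) * s 0 := by ring
  have hbound : ∀ k, s k ≤ c ^ (k / n) * s 0 := by
    intro k
    have h1 : (k / n) * n ≤ k := Nat.div_mul_le_self k n
    exact le_trans (hmono _ _ h1) (hgeo (k / n))
  have hdiv : Tendsto (fun k : ℕ => k / n) atTop atTop := by
    apply tendsto_atTop_atTop.2
    intro b
    exact ⟨b * n, fun a ha => (Nat.le_div_iff_mul_le hn).2 ha⟩
  have hg : Tendsto (fun k : ℕ => c ^ (k / n) * s 0) atTop (nhds 0) := by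
    have h1 : Tendsto (fun j : ℕ => c ^ j) atTop (nhds 0) :=
      tendsto_pow_atTop_nhds_zero_of_lt_one hc0 hc1
    have h2 := (h1.comp hdiv).mul_const (s 0)
    simpa using h2
  exact squeeze_zero hs0 hbound hg
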